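/- arXiv:2409.04919 — 2 statements merged into one kernel-verified Lean document; each statement's English description precedes it below -/
import Mathlib

section
/- Let $b_1, \ldots, b_K \in \mathbb{R}^{d-k}$ be unit vectors with $\|\sin\Theta(b_r, b_s)\| \geq \sqrt{2}c$ for all $r \neq s$, where $c > 0$ is a constant, and let $0 < \varepsilon < 1/2$. Define $B_r \in \mathbb{R}^{d\times k}$ whose first $k-1$ columns are the standard basis vectors $e_1, \ldots, e_{k-1}$ of $\mathbb{R}^d$ and whose last column is $(\sqrt{1-\varepsilon}\, e_k; \sqrt{\varepsilon}\, b_r)$ (concatenating a $k$-dimensional and $(d-k)$-dimensional part). Then each $B_r$ has orthonormal columns, and for any $r \neq s$, $\|B_r B_r^\intercal - B_s B_s^\intercal\| \geq c\sqrt{\varepsilon}$. -/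
open Matrix

noncomputable def specNorm {n : Type*} [Fintype n] [DecidableEq n]
    (A : Matrix n n ℝ) : ℝ :=
  ‖Matrix.toEuclideanCLM (𝕜 := ℝ) A‖

lemma specNorm_mulVec_le {n : Type*} [Fintype n] [DecidableEq n]
    (A : Matrix n n ℝ) (x : n → ℝ) :
    Real.sqrt (∑ i, (A.mulVec x i) ^ 2) ≤ specNorm A * Real.sqrt (∑ i, x i ^ 2) := by
  have h := (Matrix.toEuclideanCLM (𝕜 := ℝ) A).le_opNorm ((WithLp.equiv 2 (n → ℝ)).symm x)
  rw [WithLp.equiv_symm_apply, Matrix.toEuclideanCLM_toLp] at h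
  simp only [EuclideanSpace.norm_eq, PiLp.toLp_apply, Real.norm_eq_abs, sq_abs,
    Matrix.toLin'_apply] at h
  exact h

lemma specNorm_le_frob {n : Type*} [Fintype n] [DecidableEq n]
    (A : Matrix n n ℝ) :
    specNorm A ≤ Real.sqrt (∑ i, ∑ j, A i j ^ 2) := by
  rw [specNorm]
  refine ContinuousLinearMap.opNorm_le_bound _ (Real.sqrt_nonneg _) fun x => ?_
  obtain ⟨y, rfl⟩ : ∃ y : n → ℝ, (WithLp.equiv 2 (n → ℝ)).symm y = x :=
    ⟨WithLp.equiv 2 _ x, by simp⟩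
  rw [WithLp.equiv_symm_apply, Matrix.toEuclideanCLM_toLp]
  simp only [EuclideanSpace.norm_eq, PiLp.toLp_apply, Real.norm_eq_abs, sq_abs,
    Matrix.toLin'_apply]
  rw [← Real.sqrt_mul (by positivity)]
  apply Real.sqrt_le_sqrt
  rw [Finset.sum_mul]
  refine Finset.sum_le_sum fun i _ => ?_
  simpa [Matrix.mulVec, dotProduct] using Finset.sum_mul_sq_le_sq_mul_sq Finset.univ (A i) y

lemma sum_ite_ite {α : Type*} [Fintype α] [DecidableEq α] (a b : α) (x y : ℝ) :
    ∑ i, (if i = a then x else 0) * (if i = b then y else 0)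
      = if a = b then x * y else 0 := by
  have h : ∀ i, (if i = a then x else 0) * (if i = b then y else 0)
      = if i = a then (if a = b then x * y else 0) else 0 := by
    intro i
    by_cases hia : i = a
    · subst hia
      by_cases hib : i = b <;> simp [hib]
    · simp [hia]
  simp_rw [h]
  rw [Finset.sum_ite_eq' Finset.univ a]
  simp

/-- The packing construction: from a `√2 c`-separated family of unit vectors
`b₁,…,b_K ∈ ℝ^{d-k}` one builds orthonormal `B_r ∈ ℝ^{d×k}` (with `ℝ^d` written in block
form `ℝ^k ⊕ ℝ^{d-k}`) that are `c√ε`-separated in principal angle distance. -/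
theorem packing_construction {k m K : ℕ} (hk : 0 < k)
    (c ε : ℝ) (hc : 0 < c) (hε1 : 0 < ε) (hε2 : ε < 1 / 2)
    (b : Fin K → Fin m → ℝ) (hunit : ∀ r, ∑ i, (b r i) ^ 2 = 1)
    (hsep : ∀ r s, r ≠ s → Real.sqrt 2 * c ≤
      specNorm (Matrix.vecMulVec (b r) (b r) - Matrix.vecMulVec (b s) (b s)))
    (B : Fin K → Matrix (Fin k ⊕ Fin m) (Fin k) ℝ)
    (hB : ∀ r, B r = Matrix.of (Sum.elim
      (fun (i' : Fin k) (j : Fin k) =>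
        if (j : ℕ) = k - 1 then (if (i' : ℕ) = k - 1 then Real.sqrt (1 - ε) else 0)
        else (if i' = j then 1 else 0))
      (fun (i'' : Fin m) (j : Fin k) =>
        if (j : ℕ) = k - 1 then Real.sqrt ε * b r i'' else 0))) :
    (∀ r, (B r)ᵀ * B r = 1)
    ∧ (∀ r s, r ≠ s →
        c * Real.sqrt ε ≤ specNorm (B r * (B r)ᵀ - B s * (B s)ᵀ)) := by
  have hε1' : (0:ℝ) ≤ 1 - ε := by linarith
  set lst : Fin k := ⟨k - 1, Nat.sub_lt hk one_pos⟩ with hlst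
  have hcoe : ∀ j : Fin k, ((j : ℕ) = k - 1) = (j = lst) := by
    intro j; simp [Fin.ext_iff, hlst]
  have hB' : ∀ r, B r = Matrix.of (Sum.elim
      (fun (i' : Fin k) (j : Fin k) =>
        if j = lst then (if i' = lst then Real.sqrt (1 - ε) else 0)
        else (if i' = j then 1 else 0))
      (fun (i'' : Fin m) (j : Fin k) =>
        if j = lst then Real.sqrt ε * b r i'' else 0)) := by
    intro r; rw [hB r]
    congr 1
    funext i j
    rcases i with i | i <;> simp [hcoe]
  set v : Fin K → (Fin k ⊕ Fin m) → ℝ := fun r => Sum.elim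
      (fun i => if i = lst then Real.sqrt (1 - ε) else 0)
      (fun i => Real.sqrt ε * b r i) with hv
  have hbb : ∀ r, ∑ i : Fin m, (Real.sqrt ε * b r i) * (Real.sqrt ε * b r i) = ε := by
    intro r
    calc ∑ i : Fin m, (Real.sqrt ε * b r i) * (Real.sqrt ε * b r i)
        = ε * ∑ i, b r i ^ 2 := by
          rw [Finset.mul_sum]
          refine Finset.sum_congr rfl fun i _ => ?_
          rw [show Real.sqrt ε * b r i * (Real.sqrt ε * b r i)
            = (Real.sqrt ε * Real.sqrt ε) * (b r i ^ 2) by ring, Real.mul_self_sqrt hε1.le]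
      _ = ε := by rw [hunit r, mul_one]
  have hvsq : ∀ r, ∑ i, v r i ^ 2 = 1 := by
    intro r
    rw [hv, Fintype.sum_sum_type]
    simp only [Sum.elim_inl, Sum.elim_inr, apply_ite (· ^ 2), zero_pow, OfNat.ofNat_ne_zero,
      ne_eq, not_false_iff]
    rw [Finset.sum_ite_eq' Finset.univ lst]
    simp only [mul_pow, ← Finset.mul_sum, hunit r, Real.sq_sqrt hε1.le,
      Real.sq_sqrt hε1', mul_one, Finset.mem_univ, if_true]
    ring
  have hvdot : ∀ r s, ∑ i, v r i * v s i = (1 - ε) + ε * ∑ i, b r i * b s i := by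
    intro r s
    rw [hv, Fintype.sum_sum_type]
    simp only [Sum.elim_inl, Sum.elim_inr]
    rw [sum_ite_ite lst lst, if_pos rfl]
    have h2 : ∑ i : Fin m, (Real.sqrt ε * b r i) * (Real.sqrt ε * b s i)
        = ε * ∑ i, b r i * b s i := by
      rw [Finset.mul_sum]
      refine Finset.sum_congr rfl fun i _ => ?_
      rw [show Real.sqrt ε * b r i * (Real.sqrt ε * b s i)
        = (Real.sqrt ε * Real.sqrt ε) * (b r i * b s i) by ring, Real.mul_self_sqrt hε1.le]
    rw [h2]
    simp [Real.mul_self_sqrt hε1']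
  have hD : ∀ r s, B r * (B r)ᵀ - B s * (B s)ᵀ
      = Matrix.vecMulVec (v r) (v r) - Matrix.vecMulVec (v s) (v s) := by
    intro r s
    ext i i'
    simp only [Matrix.sub_apply, Matrix.mul_apply, Matrix.transpose_apply, hB' r, hB' s,
      Matrix.of_apply, Matrix.vecMulVec_apply]
    rw [← Finset.sum_sub_distrib]
    refine (Finset.sum_eq_single_of_mem lst (Finset.mem_univ _) fun j _ hj => ?_).trans ?_
    · rcases i with i | i <;> rcases i' with i' | i' <;> simp [hj]
    · rcases i with i | i <;> rcases i' with i' | i' <;> simp [hv]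
  refine ⟨?_, ?_⟩
  · intro r
    ext j j'
    rw [hB' r]
    simp only [Matrix.mul_apply, Matrix.transpose_apply, Matrix.of_apply,
      Fintype.sum_sum_type, Sum.elim_inl, Sum.elim_inr]
    by_cases hj : j = lst <;> by_cases hj' : j' = lst
    · subst hj; subst hj'
      simp only [eq_self_iff_true, if_true]
      rw [sum_ite_ite lst lst, if_pos rfl, Real.mul_self_sqrt hε1', hbb r,
        Matrix.one_apply_eq]
      ring
    · have hne : j ≠ j' := fun h => hj' (h ▸ hj)
      subst hj
      simp only [eq_self_iff_true, if_true, hj', if_false]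
      rw [sum_ite_ite lst j', if_neg hne, Matrix.one_apply_ne hne]
      simp
    · have hne : j ≠ j' := fun h => hj (h ▸ hj')
      subst hj'
      simp only [eq_self_iff_true, if_true, hj, if_false]
      rw [sum_ite_ite j lst, if_neg hne, Matrix.one_apply_ne hne]
      simp
    · simp only [hj, hj', if_false]
      rw [sum_ite_ite j j']
      by_cases hjj : j = j'
      · subst hjj; simp [Matrix.one_apply_eq]
      · simp [Matrix.one_apply_ne hjj, hjj]
  · intro r s hrs
    set t : ℝ := ∑ i, b r i * b s i with ht
    have hfr : ∑ i, ∑ j,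
        ((Matrix.vecMulVec (b r) (b r) - Matrix.vecMulVec (b s) (b s)) i j) ^ 2
        = 2 - 2 * t ^ 2 := by
      have e : ∀ i j : Fin m,
          ((Matrix.vecMulVec (b r) (b r) - Matrix.vecMulVec (b s) (b s)) i j) ^ 2
          = (b r i)^2 * (b r j)^2 + (b s i)^2 * (b s j)^2
            - 2 * ((b r i * b s i) * (b r j * b s j)) := by
        intro i j
        simp only [Matrix.sub_apply, Matrix.vecMulVec_apply]
        ring
      simp_rw [e]
      simp only [Finset.sum_sub_distrib, Finset.sum_add_distrib, ← Finset.mul_sum,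
        ← Finset.sum_mul]
      rw [hunit r, hunit s, ← ht]
      ring
    have hc2 : c ^ 2 ≤ 1 - t ^ 2 := by
      have hub := (hsep r s hrs).trans ((specNorm_le_frob _).trans_eq
        (congrArg Real.sqrt hfr))
      have hsq := (Real.le_sqrt' (by positivity)).mp hub
      rw [mul_pow, Real.sq_sqrt (by norm_num : (0:ℝ) ≤ 2)] at hsq
      linarith
    set t' : ℝ := (1 - ε) + ε * t with ht'
    have hmv : (B r * (B r)ᵀ - B s * (B s)ᵀ).mulVec (v r)
        = fun i => v r i - t' * v s i := by
      funext i
      rw [hD r s]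
      simp only [Matrix.mulVec, dotProduct, Matrix.sub_apply, Matrix.vecMulVec_apply,
        sub_mul]
      have h1 : ∑ j, v r i * v r j * v r j = v r i := by
        calc ∑ j, v r i * v r j * v r j = v r i * ∑ j, v r j ^ 2 := by
              rw [Finset.mul_sum]; exact Finset.sum_congr rfl fun j _ => by ring
          _ = v r i := by rw [hvsq r, mul_one]
      have h2 : ∑ j, v s i * v s j * v r j = t' * v s i := by
        calc ∑ j, v s i * v s j * v r j = v s i * ∑ j, v s j * v r j := by
              rw [Finset.mul_sum]; exact Finset.sum_congr rfl fun j _ => by ring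
          _ = v s i * ((1 - ε) + ε * ∑ i, b s i * b r i) := by rw [hvdot s r]
          _ = t' * v s i := by
              rw [ht', ht, show ∑ i, b s i * b r i = ∑ i, b r i * b s i from
                Finset.sum_congr rfl fun i _ => mul_comm _ _]
              ring
      rw [Finset.sum_sub_distrib, h1, h2]
    have hnorm : ∑ i, ((B r * (B r)ᵀ - B s * (B s)ᵀ).mulVec (v r) i) ^ 2
        = 1 - t' ^ 2 := by
      rw [hmv]
      have e : ∀ i, (v r i - t' * v s i) ^ 2
          = v r i ^ 2 - (2 * t') * (v r i * v s i) + t' ^ 2 * v s i ^ 2 := fun i => by ring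
      simp_rw [e]
      simp only [Finset.sum_add_distrib, Finset.sum_sub_distrib, ← Finset.mul_sum]
      rw [hvsq r, hvsq s, hvdot r s, ← ht, ← ht']
      ring
    have hlow := specNorm_mulVec_le (B r * (B r)ᵀ - B s * (B s)ᵀ) (v r)
    rw [hnorm, hvsq r, Real.sqrt_one, mul_one] at hlow
    have hkey : c ^ 2 * ε ≤ 1 - t' ^ 2 := by
      rw [ht']
      nlinarith [mul_nonneg hε1.le (by linarith : (0:ℝ) ≤ 1 - t ^ 2 - c ^ 2),
        mul_nonneg (mul_nonneg hε1.le hε1') (sq_nonneg (1 - t))]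
    calc c * Real.sqrt ε = Real.sqrt (c ^ 2 * ε) := by
          rw [Real.sqrt_mul (sq_nonneg c), Real.sqrt_sq hc.le]
      _ ≤ Real.sqrt (1 - t' ^ 2) := Real.sqrt_le_sqrt hkey
      _ ≤ _ := hlow
end

section
/- Let $\Sigma_1, \Sigma_2 \in \mathbb{R}^{n\times n}$ be symmetric matrices with $\Sigma_1 \succeq I_n$ and $\Sigma_2 \succeq I_n$, and let $\Delta = \Sigma_1 - \Sigma_2$. Then $\mathrm{tr}(\Sigma_1^{-1}\Sigma_2 + \Sigma_2^{-1}\Sigma_1 - 2I_n) \leq \mathrm{tr}(\Delta^2)$. -/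
open Matrix
open scoped MatrixOrder

private lemma aux_trace_nonneg {n : ℕ} {M : Matrix (Fin n) (Fin n) ℝ}
    (h : M.PosSemidef) : 0 ≤ M.trace := by
  rw [Matrix.trace]
  refine Finset.sum_nonneg fun i _ => ?_
  exact h.diag_nonneg

private lemma aux_trace_mul_nonneg {n : ℕ} {A B : Matrix (Fin n) (Fin n) ℝ}
    (hA : A.PosSemidef) (hB : B.PosSemidef) : 0 ≤ (A * B).trace := by
  obtain ⟨C, hCh, hCm⟩ : ∃ C : Matrix (Fin n) (Fin n) ℝ, Cᴴ = C ∧ C * C = A :=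
    ⟨CFC.sqrt A, (CFC.sqrt_nonneg A).posSemidef.1, CFC.sqrt_mul_sqrt_self A hA.nonneg⟩
  have h := hB.conjTranspose_mul_mul_same C
  rw [hCh] at h
  have heq : (A * B).trace = (C * B * C).trace := by
    rw [← hCm, Matrix.trace_mul_cycle, Matrix.trace_mul_cycle]
  rw [heq]
  exact aux_trace_nonneg h

private lemma aux_one_sub_inv {n : ℕ} {S : Matrix (Fin n) (Fin n) ℝ}
    (h : (S - 1).PosSemidef) : (1 - S⁻¹).PosSemidef := by
  have hpd : S.PosDef := by
    have := Matrix.PosDef.posSemidef_add h (Matrix.PosDef.one (n := Fin n) (R := ℝ))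
    simpa using this
  have hSdet : IsUnit S.det := (Matrix.isUnit_iff_isUnit_det _).1 hpd.isUnit
  have hinv : (S⁻¹).PosSemidef := hpd.posSemidef.inv
  set T := CFC.sqrt (S⁻¹) with hTdef
  have hT2 : T * T = S⁻¹ := CFC.sqrt_mul_sqrt_self _ hinv.nonneg
  have hTH : Tᴴ = T := (CFC.sqrt_nonneg _).posSemidef.1
  have hTdet : IsUnit T.det := by
    have : IsUnit (T.det * T.det) := by
      rw [← Matrix.det_mul, hT2]
      exact Matrix.isUnit_nonsing_inv_det _ hSdet
    exact isUnit_of_mul_isUnit_left this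
  have hS : S = T⁻¹ * T⁻¹ := by
    rw [← Matrix.mul_inv_rev, hT2, Matrix.nonsing_inv_nonsing_inv _ hSdet]
  have hTST : T * S * T = 1 := by
    rw [hS, ← mul_assoc, Matrix.mul_nonsing_inv _ hTdet, one_mul,
      Matrix.nonsing_inv_mul _ hTdet]
  have key : Tᴴ * (S - 1) * T = 1 - S⁻¹ := by
    rw [hTH, mul_sub, mul_one, sub_mul, hTST, hT2]
  exact key ▸ h.conjTranspose_mul_mul_same T

/-- For symmetric matrices `Σ₁, Σ₂ ⪰ Iₙ` and `Δ = Σ₁ - Σ₂`,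
`tr(Σ₁⁻¹Σ₂ + Σ₂⁻¹Σ₁ - 2I) ≤ tr(Δ²)`. -/
theorem trace_inverse_bound {n : ℕ} (S1 S2 : Matrix (Fin n) (Fin n) ℝ)
    (h1 : (S1 - 1).PosSemidef) (h2 : (S2 - 1).PosSemidef) :
    Matrix.trace (S1⁻¹ * S2 + S2⁻¹ * S1 - (2 : ℝ) • (1 : Matrix (Fin n) (Fin n) ℝ))
      ≤ Matrix.trace ((S1 - S2) * (S1 - S2)) := by
  have hpd1 : S1.PosDef := by
    have := Matrix.PosDef.posSemidef_add h1 (Matrix.PosDef.one (n := Fin n) (R := ℝ)); simpa using this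
  have hpd2 : S2.PosDef := by
    have := Matrix.PosDef.posSemidef_add h2 (Matrix.PosDef.one (n := Fin n) (R := ℝ)); simpa using this
  have hd1 : IsUnit S1.det := (Matrix.isUnit_iff_isUnit_det _).1 hpd1.isUnit
  have hd2 : IsUnit S2.det := (Matrix.isUnit_iff_isUnit_det _).1 hpd2.isUnit
  have hm1 : S1 * S1⁻¹ = 1 := Matrix.mul_nonsing_inv _ hd1
  have hi1 : S1⁻¹ * S1 = 1 := Matrix.nonsing_inv_mul _ hd1
  have hi2 : S2⁻¹ * S2 = 1 := Matrix.nonsing_inv_mul _ hd2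
  have hΔ : (S1 - S2)ᴴ = S1 - S2 := by
    have hh1 : S1.IsHermitian := by simpa using h1.1.add (Matrix.isHermitian_one)
    have hh2 : S2.IsHermitian := by simpa using h2.1.add (Matrix.isHermitian_one)
    rw [Matrix.conjTranspose_sub, hh1.eq, hh2.eq]
  have hP1 : (1 - S1⁻¹).PosSemidef := aux_one_sub_inv h1
  have hP2 : (1 - S2⁻¹).PosSemidef := aux_one_sub_inv h2
  have e3 : S2⁻¹ * S1 * (S1⁻¹ * S2) = 1 := by
    rw [mul_assoc, ← mul_assoc S1, hm1, one_mul, hi2]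
  have hmat : S1⁻¹ * S2 + S2⁻¹ * S1 - (2 : ℝ) • (1 : Matrix (Fin n) (Fin n) ℝ)
      = (S2⁻¹ * (S1 - S2)) * (S1⁻¹ * (S1 - S2)) := by
    have e1 : S1⁻¹ * (S1 - S2) = 1 - S1⁻¹ * S2 := by rw [mul_sub, hi1]
    have e2 : S2⁻¹ * (S1 - S2) = S2⁻¹ * S1 - 1 := by rw [mul_sub, hi2]
    rw [e1, e2, sub_mul, mul_sub, mul_sub, e3, two_smul]
    noncomm_ring
  have hdecomp : (S1 - S2) * (S1 - S2) - (S2⁻¹ * (S1 - S2)) * (S1⁻¹ * (S1 - S2))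
      = (S1 - S2) * (1 - S1⁻¹) * (S1 - S2)
        + (1 - S2⁻¹) * ((S1 - S2) * (S1⁻¹ * (S1 - S2))) := by
    noncomm_ring
  have t1 : 0 ≤ ((S1 - S2) * (1 - S1⁻¹) * (S1 - S2)).trace := by
    have := hP1.conjTranspose_mul_mul_same (S1 - S2)
    rw [hΔ] at this
    exact aux_trace_nonneg this
  have t2 : 0 ≤ ((1 - S2⁻¹) * ((S1 - S2) * (S1⁻¹ * (S1 - S2)))).trace := by
    refine aux_trace_mul_nonneg hP2 ?_
    have := hpd1.posSemidef.inv.conjTranspose_mul_mul_same (S1 - S2)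
    rw [hΔ, mul_assoc] at this
    exact this
  have htr : Matrix.trace ((S1 - S2) * (S1 - S2))
      - Matrix.trace (S1⁻¹ * S2 + S2⁻¹ * S1 - (2 : ℝ) • (1 : Matrix (Fin n) (Fin n) ℝ))
      = ((S1 - S2) * (1 - S1⁻¹) * (S1 - S2)).trace
        + ((1 - S2⁻¹) * ((S1 - S2) * (S1⁻¹ * (S1 - S2)))).trace := by
    rw [hmat, ← Matrix.trace_sub, hdecomp, Matrix.trace_add]
  linarith
end
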